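/- Let A be a simplicial real central hyperplane arrangement with fundamental chamber c₀, and let I ⊆ A be 2-closed. If I contains all walls of c₀, then I = A. -/

import Mathlib

open Matrix
open scoped Classical

/-- Ambient space: `ℝⁿ`. -/
abbrev V (n : ℕ) := Fin n → ℝ

/-- The linear functional `x ↦ v ⬝ᵥ x` determined by a normal vector. -/
def hypl {n : ℕ} (v : V n) : V n →ₗ[ℝ] ℝ where
  toFun x := v ⬝ᵥ x
  map_add' x y := by simp [dotProduct_add]
  map_smul' c x := by simp [dotProduct_smul]

/-- Two normal vectors define the same hyperplane. -/
def SameHyp {n : ℕ} (u w : V n) : Prop := ∀ x, u ⬝ᵥ x = 0 ↔ w ⬝ᵥ x = 0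

/-- A finite set of normal vectors represents a (central) hyperplane arrangement
if each normal is nonzero and distinct normals define distinct hyperplanes. -/
def IsArrangement {n : ℕ} (A : Finset (V n)) : Prop :=
  (∀ v ∈ A, v ≠ 0) ∧ ∀ u ∈ A, ∀ w ∈ A, SameHyp u w → u = w

/-- The point `x` realizes the sign vector `c` on the arrangement `A`. -/
def Realizes {n : ℕ} (A : Finset (V n)) (c : V n → Bool) (x : V n) : Prop :=
  ∀ v ∈ A, if c v then 0 < v ⬝ᵥ x else v ⬝ᵥ x < 0

/-- A chamber of `A`, encoded by its sign vector. -/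
def IsChamber {n : ℕ} (A : Finset (V n)) (c : V n → Bool) : Prop :=
  ∃ x, Realizes A c x

/-- The separation set of two chambers: hyperplanes on which their signs differ. -/
noncomputable def SepSet {n : ℕ} (A : Finset (V n)) (c d : V n → Bool) : Finset (V n) :=
  A.filter (fun v => c v ≠ d v)

/-- The localization of `A` at the subspace `ker u ∩ ker w`:
hyperplanes containing this subspace. -/
noncomputable def loc {n : ℕ} (A : Finset (V n)) (u w : V n) : Finset (V n) :=
  A.filter (fun v => ∀ x, u ⬝ᵥ x = 0 → w ⬝ᵥ x = 0 → v ⬝ᵥ x = 0)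

/-- `u, w` span a codimension-2 intersection subspace `ker u ∩ ker w` of `A`. -/
def Codim2 {n : ℕ} (A : Finset (V n)) (u w : V n) : Prop :=
  u ∈ A ∧ w ∈ A ∧ LinearIndependent ℝ ![u, w]

/-- `I` is biclosed w.r.t. the chamber `c₀`: its intersection with each rank-2
localization is the separation set of some chamber of the localization. -/
def IsBiclosed {n : ℕ} (A : Finset (V n)) (c₀ : V n → Bool) (I : Finset (V n)) : Prop :=
  ∀ u w, Codim2 A u w →
    ∃ d, IsChamber (loc A u w) d ∧ I ∩ loc A u w = SepSet (loc A u w) c₀ d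

/-- `I ⊆ A` is convex with respect to `c₀`. -/
def IsConvex {n : ℕ} (A : Finset (V n)) (c₀ : V n → Bool) (I : Finset (V n)) : Prop :=
  ∀ H ∈ A \ I, ∃ e, IsChamber A e ∧ H ∈ SepSet A c₀ e ∧ SepSet A c₀ e ⊆ A \ I

/-- `I` is 2-closed: its intersection with each rank-2 localization is convex there. -/
def Is2Closed {n : ℕ} (A : Finset (V n)) (c₀ : V n → Bool) (I : Finset (V n)) : Prop :=
  ∀ u w, Codim2 A u w → IsConvex (loc A u w) c₀ (I ∩ loc A u w)

/-- `v` is a wall of the chamber `c`: some point of the closure of `c` lies on the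
hyperplane of `v` and strictly off every other hyperplane of `A`. -/
def IsWall {n : ℕ} (A : Finset (V n)) (c : V n → Bool) (v : V n) : Prop :=
  v ∈ A ∧ ∃ x, v ⬝ᵥ x = 0 ∧ ∀ w ∈ A, ¬ SameHyp v w →
    (if c w then 0 < w ⬝ᵥ x else w ⬝ᵥ x < 0)

/-- The sign vector `v` is feasible: some point satisfies all its strict constraints. -/
def Feasible {n : ℕ} (A : Finset (V n)) (v : V n → SignType) : Prop :=
  ∃ x : V n, ∀ h ∈ A, (v h = 1 → 0 < h ⬝ᵥ x) ∧ (v h = -1 → h ⬝ᵥ x < 0)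

/-- A circuit of `A`: a minimal nonzero infeasible sign vector supported on `A`. -/
def IsCircuit {n : ℕ} (A : Finset (V n)) (v : V n → SignType) : Prop :=
  (∀ h, v h ≠ 0 → h ∈ A) ∧ (∃ h, v h ≠ 0) ∧ ¬ Feasible A v ∧
    ∀ w : V n → SignType, (∀ h, w h ≠ 0 → w h = v h) →
      {h | w h ≠ 0} ⊂ {h | v h ≠ 0} → Feasible A w

/-- A reduced gallery from `c₀` to `-c₀` in `A`, crossing hyperplanes `H 0, H 1, …`
in order. -/
def IsGallery {n N : ℕ} (A : Finset (V n)) (c₀ : V n → Bool) (H : Fin N → V n)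
    (d : Fin (N + 1) → V n → Bool) : Prop :=
  (∀ i, IsChamber A (d i)) ∧ d 0 = c₀ ∧ (∀ v ∈ A, d (Fin.last N) v = !c₀ v) ∧
    ∀ i : Fin N, SepSet A (d i.castSucc) (d i.succ) = {H i}

/-- The enumeration `H` of `A` is admissible: on every rank-2 localization, the
induced order is the crossing order of some reduced gallery of the localization. -/
def Admissible {n N : ℕ} (A : Finset (V n)) (c₀ : V n → Bool) (H : Fin N → V n) : Prop :=
  ∀ u w, Codim2 A u w →
    ∃ (M : ℕ) (G : Fin M → V n) (e : Fin (M + 1) → V n → Bool) (φ : Fin M → Fin N),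
      IsGallery (loc A u w) c₀ G e ∧ StrictMono φ ∧ ∀ k, G k = H (φ k)

/-- The intersection lattice of `A`, as a set of subspaces of `ℝⁿ`. -/
def InterLattice {n : ℕ} (A : Finset (V n)) : Set (Submodule ℝ (V n)) :=
  {X | ∃ S : Finset (V n), S ⊆ A ∧ X = S.inf (fun v => LinearMap.ker (hypl v))}

/-- A modular element of the intersection lattice of `A`. -/
def IsModular {n : ℕ} (A : Finset (V n)) (X : Submodule ℝ (V n)) : Prop :=
  X ∈ InterLattice A ∧ ∀ Y ∈ InterLattice A, X ⊔ Y ∈ InterLattice A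

/-- The rank of the arrangement `A`. -/
noncomputable def rankA {n : ℕ} (A : Finset (V n)) : ℕ :=
  Module.finrank ℝ (Submodule.span ℝ (A : Set (V n)))

/-- A modular flag: a maximal chain `⊤ = X 0 > X 1 > ⋯ > X r` of modular
elements of the intersection lattice, with `X i` of codimension `i`. -/
def IsModularFlag {n : ℕ} (A : Finset (V n)) (X : Fin (rankA A + 1) → Submodule ℝ (V n)) : Prop :=
  X 0 = ⊤ ∧ (∀ i, IsModular A (X i)) ∧ (∀ i j, i ≤ j → X j ≤ X i) ∧
    ∀ i : Fin (rankA A + 1), Module.finrank ℝ (X i) = n - (i : ℕ)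

/-- `A` is supersolvable: its intersection lattice has a modular flag. -/
def IsSupersolvable {n : ℕ} (A : Finset (V n)) : Prop :=
  ∃ X : Fin (rankA A + 1) → Submodule ℝ (V n), IsModularFlag A X

/-- The chamber `c` is incident to the subspace `X`:  some point of `X` lies in the
closure of `c` and strictly off every hyperplane of `A` not containing `X`. -/
def IncidentSub {n : ℕ} (A : Finset (V n)) (c : V n → Bool) (X : Submodule ℝ (V n)) : Prop :=
  ∃ x, x ∈ X ∧ ∀ v ∈ A, ¬ X ≤ LinearMap.ker (hypl v) →
    (if c v then 0 < v ⬝ᵥ x else v ⬝ᵥ x < 0)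

/-- The chamber `c` is incident to the codimension-2 subspace `ker u ∩ ker w`. -/
def IncidentLoc {n : ℕ} (A : Finset (V n)) (c : V n → Bool) (u w : V n) : Prop :=
  ∃ x, (∀ v ∈ loc A u w, v ⬝ᵥ x = 0) ∧ ∀ v ∈ A, v ∉ loc A u w →
    (if c v then 0 < v ⬝ᵥ x else v ⬝ᵥ x < 0)

/-- `(A, c₀)` is bineighborly: any chamber is incident to the intersection of any two
of its walls separating it from `-c₀`. -/
def Bineighborly {n : ℕ} (A : Finset (V n)) (c₀ : V n → Bool) : Prop :=
  ∀ c, IsChamber A c → ∀ u w, IsWall A c u → IsWall A c w →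
    u ∈ SepSet A c (fun v => !c₀ v) → w ∈ SepSet A c (fun v => !c₀ v) → IncidentLoc A c u w

/-- Every chamber of `A` is a simplicial cone: its walls are linearly independent
and span the same subspace as `A`. -/
def IsSimplicial {n : ℕ} (A : Finset (V n)) : Prop :=
  ∀ c, IsChamber A c →
    LinearIndependent ℝ ((↑) : {v // IsWall A c v} → V n) ∧
      Submodule.span ℝ {v | IsWall A c v} = Submodule.span ℝ (A : Set (V n))

namespace STW

open Matrix Finset

variable {n : ℕ}

/-- The signed normal vector of `v` w.r.t. the sign vector `c`. -/
def sg (c : V n → Bool) (v : V n) : V n := if c v then v else -v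

lemma sg_eq_or (c : V n → Bool) (v : V n) : sg c v = v ∨ sg c v = -v := by
  unfold sg; by_cases h : c v <;> simp [h]

lemma sg_dot (c : V n → Bool) (v x : V n) :
    sg c v ⬝ᵥ x = if c v then v ⬝ᵥ x else -(v ⬝ᵥ x) := by
  unfold sg; by_cases h : c v <;> simp [h, neg_dotProduct]

lemma sg_dot_pos_iff (c : V n → Bool) (v x : V n) :
    (0 < sg c v ⬝ᵥ x) ↔ (if c v then 0 < v ⬝ᵥ x else v ⬝ᵥ x < 0) := by
  rw [sg_dot]; by_cases h : c v <;> simp [h]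

lemma sg_eq_of_eq {c d : V n → Bool} {v : V n} (h : c v = d v) : sg c v = sg d v := by
  unfold sg; rw [h]

lemma sg_eq_neg_of_ne {c d : V n → Bool} {v : V n} (h : c v ≠ d v) : sg c v = - sg d v := by
  unfold sg
  cases hc : c v <;> cases hd : d v <;> simp_all

lemma realizes_iff {A : Finset (V n)} {c : V n → Bool} {x : V n} :
    Realizes A c x ↔ ∀ v ∈ A, 0 < sg c v ⬝ᵥ x := by
  constructor
  · intro h v hv; rw [sg_dot_pos_iff]; exact h v hv
  · intro h v hv; rw [← sg_dot_pos_iff]; exact h v hv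

lemma realizes_dot_ne {A : Finset (V n)} {c : V n → Bool} {x : V n}
    (h : Realizes A c x) {v : V n} (hv : v ∈ A) : v ⬝ᵥ x ≠ 0 := by
  have := realizes_iff.1 h v hv
  rcases sg_eq_or c v with he | he <;> rw [he] at this
  · exact ne_of_gt this
  · rw [neg_dotProduct] at this; intro h0; rw [h0] at this; simp at this

lemma mem_sepSet_iff {A : Finset (V n)} {c d : V n → Bool} {v : V n} :
    v ∈ SepSet A c d ↔ v ∈ A ∧ c v ≠ d v := by
  unfold SepSet; simp

lemma dot_self_pos {v : V n} (hv : v ≠ 0) : 0 < v ⬝ᵥ v := by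
  have hnn : 0 ≤ v ⬝ᵥ v := by
    unfold dotProduct
    exact Finset.sum_nonneg fun i _ => mul_self_nonneg (v i)
  rcases lt_or_eq_of_le hnn with h | h
  · exact h
  · exact absurd (dotProduct_self_eq_zero.1 h.symm) hv

lemma sg_ne_zero {c : V n → Bool} {v : V n} (hv : v ≠ 0) : sg c v ≠ 0 := by
  rcases sg_eq_or c v with h | h <;> rw [h] <;> simpa

/-- same hyperplane from proportionality -/
lemma sameHyp_of_smul {u v : V n} {l : ℝ} (hl : l ≠ 0) (h : v = l • u) : SameHyp u v := by
  intro x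
  rw [h, smul_dotProduct, smul_eq_mul]
  constructor
  · intro h0; rw [h0, mul_zero]
  · intro h0; exact (mul_eq_zero.1 h0).resolve_left hl

lemma eq_of_smul_mem {A : Finset (V n)} (hA : IsArrangement A) {u v : V n} {l : ℝ}
    (hu : u ∈ A) (hv : v ∈ A) (hl : l ≠ 0) (h : v = l • u) : u = v :=
  hA.2 u hu v hv (sameHyp_of_smul hl h)

end STW
namespace STW

open Matrix Finset

variable {n : ℕ}

/-- Duality: if every common zero of `W` kills `u`, then `u` is in the span of `W`. -/
lemma mem_span_of_ker (W : Finset (V n)) (u : V n)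
    (h : ∀ x : V n, (∀ w ∈ W, w ⬝ᵥ x = 0) → u ⬝ᵥ x = 0) :
    u ∈ Submodule.span ℝ (W : Set (V n)) := by
  classical
  set E := EuclideanSpace ℝ (Fin n)
  let L : (Fin n → ℝ) ≃ₗ[ℝ] E := (WithLp.linearEquiv 2 ℝ (Fin n → ℝ)).symm
  have hinner : ∀ a b : V n, (inner ℝ (L a) (L b) : ℝ) = a ⬝ᵥ b := by
    intro a b
    rw [PiLp.inner_apply]
    simp [dotProduct, L, WithLp.linearEquiv, mul_comm]
  set K : Submodule ℝ E := Submodule.span ℝ (⇑L '' (W : Set (V n))) with hK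
  haveI : FiniteDimensional ℝ K :=
    FiniteDimensional.span_of_finite ℝ ((W.finite_toSet).image _)
  have hLu : L u ∈ Kᗮᗮ := by
    rw [Submodule.mem_orthogonal]
    intro q hq
    have hq' : ∀ w ∈ W, w ⬝ᵥ (L.symm q) = 0 := by
      intro w hw
      have : (inner ℝ (L w) q : ℝ) = 0 := by
        rw [Submodule.mem_orthogonal] at hq
        exact hq (L w) (Submodule.subset_span ⟨w, hw, rfl⟩)
      rw [← this, ← hinner w (L.symm q), L.apply_symm_apply]
    have := h (L.symm q) hq'
    rw [← hinner u (L.symm q), L.apply_symm_apply] at this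
    rw [real_inner_comm]
    exact this
  rw [Submodule.orthogonal_orthogonal] at hLu
  rw [hK, Submodule.span_image_linearEquiv] at hLu
  obtain ⟨u', hu', hequ⟩ := Submodule.mem_map.1 hLu
  rwa [← L.injective hequ]

/-- If `u` is not in the span of `W`, there is a common zero of `W` not killing `u`. -/
lemma exists_ker_not_ker {W : Finset (V n)} {u : V n}
    (h : u ∉ Submodule.span ℝ (W : Set (V n))) :
    ∃ q : V n, (∀ w ∈ W, w ⬝ᵥ q = 0) ∧ u ⬝ᵥ q ≠ 0 := by
  by_contra hcon
  push_neg at hcon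
  exact h (mem_span_of_ker W u hcon)

lemma sum_dot {ι : Type*} (s : Finset ι) (g : ι → V n) (v : V n) :
    (∑ i ∈ s, g i) ⬝ᵥ v = ∑ i ∈ s, g i ⬝ᵥ v := by
  have h := map_sum (hypl v) g s
  change v ⬝ᵥ (∑ i ∈ s, g i) = _ at h
  rw [dotProduct_comm, h]
  exact Finset.sum_congr rfl fun i _ => dotProduct_comm v (g i)

/-- Prescribing values of independent normal functionals. -/
lemma exists_dot_eq (W : Finset (V n))
    (hW : LinearIndependent ℝ (fun i : {v // v ∈ W} => (i : V n))) (f : V n → ℝ) :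
    ∃ x : V n, ∀ w ∈ W, w ⬝ᵥ x = f w := by
  classical
  have key : ∀ w ∈ W, ∃ q : V n, (∀ v ∈ W.erase w, v ⬝ᵥ q = 0) ∧ w ⬝ᵥ q ≠ 0 := by
    intro w hw
    apply exists_ker_not_ker
    have himg : ((fun i : {v // v ∈ W} => (i : V n)) '' {i : {v // v ∈ W} | (i : V n) ≠ w} : Set (V n))
        = ↑(W.erase w) := by
      ext v
      simp only [Set.mem_image, Set.mem_setOf_eq, Finset.coe_erase, Set.mem_diff,
        Set.mem_singleton_iff, Finset.mem_coe]
      constructor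
      · rintro ⟨⟨a, ha⟩, hne, rfl⟩; exact ⟨ha, hne⟩
      · rintro ⟨hv, hne⟩; exact ⟨⟨v, hv⟩, hne, rfl⟩
    have := hW.notMem_span_image (s := {i : {v // v ∈ W} | (i : V n) ≠ w})
      (x := ⟨w, hw⟩) (by simp)
    rwa [himg] at this
  choose q hq0 hqne using key
  refine ⟨∑ w ∈ W.attach, (f w / (w.1 ⬝ᵥ q w.1 w.2)) • q w.1 w.2, ?_⟩
  intro w hw
  rw [dotProduct_comm, sum_dot]
  rw [Finset.sum_eq_single (⟨w, hw⟩ : {v // v ∈ W})]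
  · rw [smul_dotProduct, smul_eq_mul]
    have hq' : q w hw ⬝ᵥ w ≠ 0 := by rw [dotProduct_comm]; exact hqne w hw
    rw [dotProduct_comm w (q w hw)]
    exact div_mul_cancel₀ _ hq'
  · rintro ⟨v, hv⟩ - hne
    rw [smul_dotProduct, smul_eq_mul]
    have hwv : w ∈ W.erase v := by
      refine Finset.mem_erase.2 ⟨?_, hw⟩
      intro h; apply hne; subst h; rfl
    have hz : q v hv ⬝ᵥ w = 0 := by rw [dotProduct_comm]; exact hq0 v hv w hwv
    rw [hz, mul_zero]
  · intro h; exact absurd (Finset.mem_attach _ _) h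

/-- Prescribing values for an independent pair. -/
lemma exists_dot_pair {u w : V n} (hind : LinearIndependent ℝ ![u, w]) (s t : ℝ) :
    ∃ y : V n, u ⬝ᵥ y = s ∧ w ⬝ᵥ y = t := by
  classical
  obtain ⟨hw0, hsm⟩ := linearIndependent_fin2.1 hind
  simp only [Matrix.cons_val_one, Matrix.head_cons, Matrix.cons_val_zero] at hw0 hsm
  have hu0 : u ≠ 0 := by
    intro h; exact hsm 0 (by rw [h, zero_smul])
  have h1 : ∃ q : V n, w ⬝ᵥ q = 0 ∧ u ⬝ᵥ q ≠ 0 := by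
    have : u ∉ Submodule.span ℝ (({w} : Finset (V n)) : Set (V n)) := by
      simp only [Finset.coe_singleton, Submodule.mem_span_singleton]
      rintro ⟨a, ha⟩; exact hsm a ha
    obtain ⟨q, hq1, hq2⟩ := exists_ker_not_ker this
    exact ⟨q, hq1 w (by simp), hq2⟩
  have h2 : ∃ q : V n, u ⬝ᵥ q = 0 ∧ w ⬝ᵥ q ≠ 0 := by
    have : w ∉ Submodule.span ℝ (({u} : Finset (V n)) : Set (V n)) := by
      simp only [Finset.coe_singleton, Submodule.mem_span_singleton]
      rintro ⟨a, ha⟩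
      have ha0 : a ≠ 0 := by rintro rfl; rw [zero_smul] at ha; exact hw0 ha.symm
      exact hsm a⁻¹ (by rw [← ha, smul_smul, inv_mul_cancel₀ ha0, one_smul])
    obtain ⟨q, hq1, hq2⟩ := exists_ker_not_ker this
    exact ⟨q, hq1 u (by simp), hq2⟩
  obtain ⟨q₁, hq₁0, hq₁⟩ := h1
  obtain ⟨q₂, hq₂0, hq₂⟩ := h2
  refine ⟨(s / (u ⬝ᵥ q₁)) • q₁ + (t / (w ⬝ᵥ q₂)) • q₂, ?_, ?_⟩
  · rw [dotProduct_add, dotProduct_smul, dotProduct_smul, smul_eq_mul, smul_eq_mul,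
      hq₂0, mul_zero, add_zero, div_mul_cancel₀ _ hq₁]
  · rw [dotProduct_add, dotProduct_smul, dotProduct_smul, smul_eq_mul, smul_eq_mul,
      hq₁0, mul_zero, zero_add, div_mul_cancel₀ _ hq₂]

end STW
namespace STW

open Matrix Finset

variable {n : ℕ}

/-- Perturbation: strict inequalities survive small perturbations. -/
lemma pert (T : Finset (V n)) (c : V n → Bool) (z q : V n)
    (hz : ∀ v ∈ T, 0 < sg c v ⬝ᵥ z) :
    ∃ δ₀ : ℝ, 0 < δ₀ ∧ ∀ δ : ℝ, |δ| < δ₀ → ∀ v ∈ T, 0 < sg c v ⬝ᵥ (z + δ • q) := by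
  classical
  rcases T.eq_empty_or_nonempty with rfl | hT
  · exact ⟨1, one_pos, fun δ _ v hv => absurd hv (by simp)⟩
  · refine ⟨T.inf' hT (fun v => (sg c v ⬝ᵥ z) / (|sg c v ⬝ᵥ q| + 1)), ?_, ?_⟩
    · rw [Finset.lt_inf'_iff]
      intro v hv
      exact div_pos (hz v hv) (by positivity)
    · intro δ hδ v hv
      have hle : T.inf' hT (fun v => (sg c v ⬝ᵥ z) / (|sg c v ⬝ᵥ q| + 1))
          ≤ (sg c v ⬝ᵥ z) / (|sg c v ⬝ᵥ q| + 1) := Finset.inf'_le _ hv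
      have habs : |δ * (sg c v ⬝ᵥ q)| < sg c v ⬝ᵥ z := by
        rw [abs_mul]
        calc |δ| * |sg c v ⬝ᵥ q| ≤ |δ| * (|sg c v ⬝ᵥ q| + 1) := by
              apply mul_le_mul_of_nonneg_left (by linarith [abs_nonneg (sg c v ⬝ᵥ q)]) (abs_nonneg δ)
          _ < ((sg c v ⬝ᵥ z) / (|sg c v ⬝ᵥ q| + 1)) * (|sg c v ⬝ᵥ q| + 1) := by
              apply mul_lt_mul_of_pos_right (lt_of_lt_of_le hδ hle) (by positivity)
          _ = sg c v ⬝ᵥ z := div_mul_cancel₀ _ (by positivity)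
      rw [dotProduct_add, dotProduct_smul, smul_eq_mul]
      have := abs_lt.1 habs
      linarith [this.1]

/-- A vector avoiding finitely many hyperplanes. -/
lemma avoid (S : Finset (V n)) (hS : ∀ w ∈ S, w ≠ 0) : ∃ u : V n, ∀ w ∈ S, w ⬝ᵥ u ≠ 0 := by
  classical
  induction S using Finset.induction_on with
  | empty => exact ⟨0, by simp⟩
  | @insert a s ha IH =>
    obtain ⟨u, hu⟩ := IH (fun w hw => hS w (Finset.mem_insert_of_mem hw))
    have ha0 : a ≠ 0 := hS a (Finset.mem_insert_self a s)
    set bad : Finset ℝ := insert (-(a ⬝ᵥ u) / (a ⬝ᵥ a))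
      (s.image (fun w => -(w ⬝ᵥ u) / (w ⬝ᵥ a))) with hbad
    obtain ⟨t, ht⟩ := Infinite.exists_notMem_finset bad
    refine ⟨u + t • a, ?_⟩
    intro w hw
    rcases Finset.mem_insert.1 hw with heq | hws
    · subst heq
      rw [dotProduct_add, dotProduct_smul, smul_eq_mul]
      intro h0
      apply ht
      rw [hbad]
      apply Finset.mem_insert.2
      left
      have haa : (0:ℝ) < w ⬝ᵥ w := dot_self_pos ha0
      field_simp
      linarith
    · rw [dotProduct_add, dotProduct_smul, smul_eq_mul]
      intro h0
      by_cases hwa : w ⬝ᵥ a = 0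
      · rw [hwa, mul_zero, add_zero] at h0
        exact hu w hws h0
      · apply ht
        rw [hbad]
        apply Finset.mem_insert.2
        right
        apply Finset.mem_image.2
        refine ⟨w, hws, ?_⟩
        field_simp
        linarith
  
/-- The opposite sign vector is a chamber. -/
lemma opp_realizes {A : Finset (V n)} {c : V n → Bool} {x : V n} (h : Realizes A c x) :
    Realizes A (fun v => !c v) (-x) := by
  intro v hv
  have := h v hv
  cases hc : c v <;> rw [hc] at this <;> simp_all [dotProduct_neg]

end STW
namespace STW

open Matrix Finset

variable {n : ℕ}

lemma sg_eq_smul (c : V n → Bool) (v : V n) :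
    sg c v = (if c v then (1:ℝ) else -1) • v := by
  unfold sg; by_cases h : c v <;> simp [h]

lemma sg_coef_ne (c : V n → Bool) (v : V n) : (if c v then (1:ℝ) else -1) ≠ 0 := by
  by_cases h : c v <;> simp [h]

/-- First-crossing lemma. -/
lemma fc {A : Finset (V n)} (hA : IsArrangement A) {c : V n → Bool} {y₀ : V n}
    (hy₀ : Realizes A c y₀) (p : V n) (hB : ∃ v ∈ A, sg c v ⬝ᵥ p < 0) :
    ∃ v₁ ∈ A, sg c v₁ ⬝ᵥ p < 0 ∧ IsWall A c v₁ ∧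
      ∃ z, v₁ ⬝ᵥ z = 0 ∧ ∀ w ∈ A, w ≠ v₁ → 0 < sg c w ⬝ᵥ z := by
  classical
  set B := A.filter (fun v => sg c v ⬝ᵥ p < 0) with hBdef
  have hBne : B.Nonempty := by
    obtain ⟨v, hv, hvp⟩ := hB; exact ⟨v, Finset.mem_filter.2 ⟨hv, hvp⟩⟩
  set GS : Finset (V n) :=
    ((B ×ˢ B).filter (fun pr => pr.1 ≠ pr.2)).image
      (fun pr => (sg c pr.1 ⬝ᵥ p) • sg c pr.2 - (sg c pr.2 ⬝ᵥ p) • sg c pr.1) with hGS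
  have memB : ∀ v ∈ B, v ∈ A ∧ sg c v ⬝ᵥ p < 0 := fun v hv => Finset.mem_filter.1 hv
  have hGSne : ∀ g ∈ GS, g ≠ 0 := by
    intro g hg
    rw [hGS] at hg
    obtain ⟨⟨v, w⟩, hvw, rfl⟩ := Finset.mem_image.1 hg
    obtain ⟨hmem, hne⟩ := Finset.mem_filter.1 hvw
    obtain ⟨hvB, hwB⟩ := Finset.mem_product.1 hmem
    simp only at hne
    obtain ⟨hvA, hvp⟩ := memB v hvB
    obtain ⟨hwA, hwp⟩ := memB w hwB
    intro h0
    rw [sub_eq_zero] at h0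
    obtain ⟨av, hav⟩ : ∃ t, sg c v ⬝ᵥ p = t := ⟨_, rfl⟩
    obtain ⟨aw, haw⟩ : ∃ t, sg c w ⬝ᵥ p = t := ⟨_, rfl⟩
    rw [hav, haw] at h0
    rw [sg_eq_smul c v, sg_eq_smul c w, smul_smul, smul_smul] at h0
    set ev := if c v then (1:ℝ) else -1 with hev
    set ew := if c w then (1:ℝ) else -1 with hew
    have hne0 : av * ew ≠ 0 := by
      apply mul_ne_zero
      · rw [← hav]; exact ne_of_lt hvp
      · rw [hew]; exact sg_coef_ne c w
    have hl : w = ((aw * ev) / (av * ew)) • v := by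
      calc w = (av*ew)⁻¹ • ((av*ew) • w) := by
              rw [smul_smul, inv_mul_cancel₀ hne0, one_smul]
        _ = (av*ew)⁻¹ • ((aw*ev) • v) := by rw [h0]
        _ = ((aw*ev)/(av*ew)) • v := by rw [smul_smul, div_eq_inv_mul]
    have hlne : ((aw * ev) / (av * ew)) ≠ 0 := by
      apply div_ne_zero _ hne0
      apply mul_ne_zero
      · rw [← haw]; exact ne_of_lt hwp
      · rw [hev]; exact sg_coef_ne c v
    exact hne (eq_of_smul_mem hA hvA hwA hlne hl)
  obtain ⟨u, hu⟩ := avoid GS hGSne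
  obtain ⟨δ₀, hδ₀, hpert⟩ := pert A c y₀ u (realizes_iff.1 hy₀)
  set R : Finset ℝ := GS.image (fun g => -(g ⬝ᵥ y₀) / (g ⬝ᵥ u)) with hR
  have hIoo : (Set.Ioo (0:ℝ) δ₀ \ ↑R).Nonempty :=
    ((Set.Ioo_infinite hδ₀).diff R.finite_toSet).nonempty
  obtain ⟨ε, hεI, hεR⟩ := hIoo
  obtain ⟨hε0, hεδ⟩ := hεI
  set y := y₀ + ε • u with hy
  have hyr : ∀ v ∈ A, 0 < sg c v ⬝ᵥ y :=
    hpert ε (by rw [abs_of_pos hε0]; exact hεδ)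
  have hgy : ∀ g ∈ GS, g ⬝ᵥ y ≠ 0 := by
    intro g hg h0
    rw [hy, dotProduct_add, dotProduct_smul, smul_eq_mul] at h0
    have hgu := hu g hg
    apply hεR
    apply Finset.mem_coe.2
    rw [hR]
    apply Finset.mem_image.2
    refine ⟨g, hg, ?_⟩
    field_simp
    linarith
  set tm : V n → ℝ := fun v => (sg c v ⬝ᵥ y) / (sg c v ⬝ᵥ y - sg c v ⬝ᵥ p) with htm
  have htm01 : ∀ v ∈ B, 0 < tm v ∧ tm v < 1 := by
    intro v hv
    obtain ⟨hvA, hvp⟩ := memB v hv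
    have ha := hyr v hvA
    constructor
    · show 0 < (sg c v ⬝ᵥ y) / (sg c v ⬝ᵥ y - sg c v ⬝ᵥ p)
      apply div_pos ha; linarith
    · show (sg c v ⬝ᵥ y) / (sg c v ⬝ᵥ y - sg c v ⬝ᵥ p) < 1
      rw [div_lt_one (by linarith)]; linarith
  obtain ⟨v₁, hv₁B, hmin⟩ := Finset.exists_min_image B tm hBne
  obtain ⟨hv₁A, hv₁p⟩ := memB v₁ hv₁B
  have ha₁ := hyr v₁ hv₁A
  obtain ⟨ht₁0, ht₁1⟩ := htm01 v₁ hv₁B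
  set z := y + tm v₁ • (p - y) with hz
  have hdz : ∀ v : V n, sg c v ⬝ᵥ z
      = sg c v ⬝ᵥ y + tm v₁ * (sg c v ⬝ᵥ p - sg c v ⬝ᵥ y) := by
    intro v
    rw [hz, dotProduct_add, dotProduct_smul, smul_eq_mul, dotProduct_sub]
  have hden₁ : sg c v₁ ⬝ᵥ y - sg c v₁ ⬝ᵥ p ≠ 0 := by
    intro h; rw [sub_eq_zero] at h; rw [h] at ha₁; linarith
  have hz₁ : sg c v₁ ⬝ᵥ z = 0 := by
    rw [hdz]
    show sg c v₁ ⬝ᵥ y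
        + (sg c v₁ ⬝ᵥ y) / (sg c v₁ ⬝ᵥ y - sg c v₁ ⬝ᵥ p)
          * (sg c v₁ ⬝ᵥ p - sg c v₁ ⬝ᵥ y) = 0
    field_simp
    ring
  have hz₁' : v₁ ⬝ᵥ z = 0 := by
    rw [sg_eq_smul, smul_dotProduct, smul_eq_mul] at hz₁
    exact (mul_eq_zero.1 hz₁).resolve_left (sg_coef_ne c v₁)
  have hother : ∀ w ∈ A, w ≠ v₁ → 0 < sg c w ⬝ᵥ z := by
    intro w hwA hwne
    have haw := hyr w hwA
    by_cases hwB : w ∈ B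
    · obtain ⟨-, hwp⟩ := memB w hwB
      have htwne : tm w ≠ tm v₁ := by
        intro heq
        have hgmem : ((sg c v₁ ⬝ᵥ p) • sg c w - (sg c w ⬝ᵥ p) • sg c v₁) ∈ GS := by
          rw [hGS]
          apply Finset.mem_image.2
          exact ⟨(v₁, w), Finset.mem_filter.2 ⟨Finset.mem_product.2 ⟨hv₁B, hwB⟩,
            by simpa using (Ne.symm hwne)⟩, rfl⟩
        apply hgy _ hgmem
        rw [sub_dotProduct, smul_dotProduct, smul_dotProduct, smul_eq_mul, smul_eq_mul]
        have heq' : (sg c w ⬝ᵥ y) / (sg c w ⬝ᵥ y - sg c w ⬝ᵥ p)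
            = (sg c v₁ ⬝ᵥ y) / (sg c v₁ ⬝ᵥ y - sg c v₁ ⬝ᵥ p) := heq
        have hd1 : (0:ℝ) < sg c v₁ ⬝ᵥ y - sg c v₁ ⬝ᵥ p := by linarith
        have hdw : (0:ℝ) < sg c w ⬝ᵥ y - sg c w ⬝ᵥ p := by linarith
        rw [div_eq_div_iff hdw.ne' hd1.ne'] at heq'
        linear_combination -heq'
      have htlt : tm v₁ < tm w := lt_of_le_of_ne (hmin w hwB) (Ne.symm htwne)
      rw [hdz]
      have hdw : (0:ℝ) < sg c w ⬝ᵥ y - sg c w ⬝ᵥ p := by linarith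
      have hkey : tm v₁ * (sg c w ⬝ᵥ y - sg c w ⬝ᵥ p)
          < tm w * (sg c w ⬝ᵥ y - sg c w ⬝ᵥ p) :=
        mul_lt_mul_of_pos_right htlt hdw
      have htw : tm w * (sg c w ⬝ᵥ y - sg c w ⬝ᵥ p) = sg c w ⬝ᵥ y :=
        div_mul_cancel₀ _ hdw.ne'
      nlinarith [hkey, htw]
    · have hbw : 0 ≤ sg c w ⬝ᵥ p := by
        by_contra hlt
        exact hwB (Finset.mem_filter.2 ⟨hwA, by linarith⟩)
      rw [hdz]
      nlinarith [mul_pos ht₁0 haw, mul_nonneg (le_of_lt ht₁0) hbw,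
        mul_pos (by linarith : (0:ℝ) < 1 - tm v₁) haw]
  refine ⟨v₁, hv₁A, hv₁p, ⟨hv₁A, z, hz₁', ?_⟩, z, hz₁', hother⟩
  intro w hwA hsame
  have hwne : w ≠ v₁ := by
    intro h
    subst h
    exact hsame (fun x => Iff.rfl)
  rw [← sg_dot_pos_iff]
  exact hother w hwA hwne

end STW
namespace STW

open Matrix Finset

variable {n : ℕ}

/-- The flip of a sign vector across one hyperplane. -/
noncomputable def flip (c : V n → Bool) (v₁ : V n) : V n → Bool := fun w => if w = v₁ then !(c w) else c w

lemma flip_self (c : V n → Bool) (v₁ : V n) : flip c v₁ v₁ = !(c v₁) := if_pos rfl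

lemma flip_ne (c : V n → Bool) (v₁ : V n) {w : V n} (h : w ≠ v₁) : flip c v₁ w = c w :=
  if_neg h

lemma sg_flip_self (c : V n → Bool) (v₁ : V n) : sg (flip c v₁) v₁ = - sg c v₁ := by
  unfold sg
  rw [flip_self]
  cases h : c v₁ <;> simp

lemma sg_flip_ne (c : V n → Bool) (v₁ : V n) {w : V n} (h : w ≠ v₁) :
    sg (flip c v₁) w = sg c w := by
  unfold sg; rw [flip_ne c v₁ h]

lemma flip_chamber {A : Finset (V n)} (hA : IsArrangement A) {c : V n → Bool} {v₁ z : V n}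
    (hv₁ : v₁ ∈ A) (hz0 : v₁ ⬝ᵥ z = 0) (hz : ∀ w ∈ A, w ≠ v₁ → 0 < sg c w ⬝ᵥ z) :
    ∃ x, Realizes A (flip c v₁) x := by
  classical
  obtain ⟨δ₀, hδ₀, hp⟩ := pert (A.erase v₁) c z (-(sg c v₁))
    (fun w hw => hz w (Finset.mem_erase.1 hw).2 (Finset.mem_erase.1 hw).1)
  refine ⟨z + (δ₀/2) • (-(sg c v₁)), ?_⟩
  rw [realizes_iff]
  intro v hv
  by_cases hvv : v = v₁
  · subst hvv
    rw [sg_flip_self]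
    rw [neg_dotProduct, dotProduct_add, dotProduct_smul, smul_eq_mul, dotProduct_neg]
    have hsz : sg c v ⬝ᵥ z = 0 := by
      rw [sg_eq_smul, smul_dotProduct, smul_eq_mul, hz0, mul_zero]
    have hss : 0 < sg c v ⬝ᵥ sg c v := dot_self_pos (sg_ne_zero (hA.1 v hv))
    rw [hsz]
    have : 0 < δ₀/2 := by linarith
    nlinarith
  · rw [sg_flip_ne c v₁ hvv]
    exact hp (δ₀/2) (by rw [abs_of_pos (by linarith)]; linarith) v
      (Finset.mem_erase.2 ⟨hvv, hv⟩)

lemma sep_flip {A : Finset (V n)} (c₀ c : V n → Bool) {v₁ : V n}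
    (hv₁ : v₁ ∈ SepSet A c₀ c) :
    SepSet A c₀ (flip c v₁) = (SepSet A c₀ c).erase v₁ := by
  classical
  obtain ⟨hv₁A, hv₁ne⟩ := mem_sepSet_iff.1 hv₁
  ext w
  rw [mem_sepSet_iff, Finset.mem_erase, mem_sepSet_iff]
  by_cases hw : w = v₁
  · subst hw
    rw [flip_self]
    constructor
    · rintro ⟨-, hne⟩
      exfalso
      cases h1 : c₀ w <;> cases h2 : c w <;> rw [h1, h2] at hne hv₁ne <;> simp_all
    · rintro ⟨hne, -⟩; exact absurd rfl hne
  · rw [flip_ne c v₁ hw]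
    constructor
    · rintro ⟨hA', hne⟩; exact ⟨hw, hA', hne⟩
    · rintro ⟨-, hA', hne⟩; exact ⟨hA', hne⟩

end STW
namespace STW

open Matrix Finset

variable {n : ℕ}

lemma loc_subset (A : Finset (V n)) (u w : V n) : loc A u w ⊆ A :=
  Finset.filter_subset _ _

lemma mem_loc_left {A : Finset (V n)} {u : V n} (hu : u ∈ A) (w : V n) : u ∈ loc A u w :=
  Finset.mem_filter.2 ⟨hu, fun _ h _ => h⟩

lemma mem_loc_right {A : Finset (V n)} {w : V n} (hw : w ∈ A) (u : V n) : w ∈ loc A u w :=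
  Finset.mem_filter.2 ⟨hw, fun _ _ h => h⟩

lemma mem_loc_iff_span {A : Finset (V n)} {u w v : V n} :
    v ∈ loc A u w ↔ v ∈ A ∧ v ∈ Submodule.span ℝ ({u, w} : Set (V n)) := by
  classical
  constructor
  · intro h
    obtain ⟨hvA, hker⟩ := Finset.mem_filter.1 h
    refine ⟨hvA, ?_⟩
    have := mem_span_of_ker ({u, w} : Finset (V n)) v (by
      intro x hx
      exact hker x (hx u (by simp)) (hx w (by simp)))
    rwa [Finset.coe_insert, Finset.coe_singleton] at this
  · rintro ⟨hvA, hsp⟩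
    obtain ⟨a, b, hab⟩ := Submodule.mem_span_pair.1 hsp
    refine Finset.mem_filter.2 ⟨hvA, ?_⟩
    intro x hux hwx
    rw [← hab, add_dotProduct, smul_dotProduct, smul_dotProduct, smul_eq_mul, smul_eq_mul,
      hux, hwx, mul_zero, mul_zero, add_zero]

/-- The walls of a chamber, as a finset. -/
noncomputable def wallsF (A : Finset (V n)) (c : V n → Bool) : Finset (V n) :=
  A.filter (fun v => IsWall A c v)

lemma mem_wallsF {A : Finset (V n)} {c : V n → Bool} {v : V n} :
    v ∈ wallsF A c ↔ IsWall A c v :=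
  ⟨fun h => (Finset.mem_filter.1 h).2, fun h => Finset.mem_filter.2 ⟨h.1, h⟩⟩

lemma wallsF_indep {A : Finset (V n)} {c : V n → Bool}
    (hli : LinearIndependent ℝ ((↑) : {v // IsWall A c v} → V n)) :
    LinearIndependent ℝ (fun i : {v // v ∈ wallsF A c} => (i : V n)) := by
  let e : {v // v ∈ wallsF A c} ≃ {v // IsWall A c v} :=
    Equiv.subtypeEquivRight (fun v => mem_wallsF)
  have h2 := hli.comp e e.injective
  have h3 : (Subtype.val ∘ ⇑e) = (fun i : {v // v ∈ wallsF A c} => (i : V n)) := by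
    funext i; simp [e, Equiv.subtypeEquivRight, Equiv.subtypeEquiv]
  rwa [h3] at h2

/-- Every hyperplane's signed normal is a nonnegative combination of the signed
wall normals of any chamber (the dual-cone property of simplicial chambers). -/
lemma crux {A : Finset (V n)} (hA : IsArrangement A) (hsimp : IsSimplicial A)
    {c : V n → Bool} {y₀ : V n} (hy₀ : Realizes A c y₀) {v : V n} (hv : v ∈ A) :
    ∃ μ : V n → ℝ, (∀ w ∈ wallsF A c, 0 ≤ μ w) ∧
      ∑ w ∈ wallsF A c, μ w • sg c w = sg c v := by
  classical
  obtain ⟨hli, hspan⟩ := hsimp c ⟨y₀, hy₀⟩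
  have hWset : ({v | IsWall A c v} : Set (V n)) = ↑(wallsF A c) := by
    ext w; simp only [Set.mem_setOf_eq, Finset.mem_coe]; exact mem_wallsF.symm
  have hvspan : sg c v ∈ Submodule.span ℝ (↑(wallsF A c) : Set (V n)) := by
    rw [← hWset, hspan]
    rcases sg_eq_or c v with h | h <;> rw [h]
    · exact Submodule.subset_span hv
    · exact Submodule.neg_mem _ (Submodule.subset_span hv)
  obtain ⟨f, -, hf⟩ := Submodule.mem_span_finset.1 hvspan
  set μ : V n → ℝ := fun w => f w * (if c w then 1 else -1) with hμ
  have hsum : ∑ w ∈ wallsF A c, μ w • sg c w = sg c v := by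
    rw [← hf]
    apply Finset.sum_congr rfl
    intro w _
    rw [sg_eq_smul]
    by_cases h : c w <;> simp [hμ, h, smul_smul]
  refine ⟨μ, ?_, hsum⟩
  intro w₀ hw₀
  by_contra hneg
  push_neg at hneg
  obtain ⟨epj, hepj⟩ := exists_dot_eq (wallsF A c) (wallsF_indep hli)
    (fun w => if w = w₀ then (if c w then 1 else -1) else 0)
  have hsge : ∀ w ∈ wallsF A c, sg c w ⬝ᵥ epj = if w = w₀ then 1 else 0 := by
    intro w hw
    rw [sg_eq_smul, smul_dotProduct, smul_eq_mul, hepj w hw]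
    by_cases h1 : w = w₀
    · subst h1
      by_cases h2 : c w <;> simp [h2]
    · by_cases h2 : c w <;> simp [h1, h2]
  have hveval : sg c v ⬝ᵥ epj = μ w₀ := by
    rw [← hsum, sum_dot]
    rw [Finset.sum_eq_single w₀]
    · rw [smul_dotProduct, smul_eq_mul, hsge w₀ hw₀, if_pos rfl, mul_one]
    · intro w hw hne
      rw [smul_dotProduct, smul_eq_mul, hsge w hw, if_neg hne, mul_zero]
    · intro h; exact absurd hw₀ h
  obtain ⟨v₁, hv₁A, hv₁p, hwall, -⟩ := fc hA hy₀ epj ⟨v, hv, by rw [hveval]; exact hneg⟩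
  have hv₁w : v₁ ∈ wallsF A c := mem_wallsF.2 hwall
  have hval := hsge v₁ hv₁w
  rw [hval] at hv₁p
  by_cases h : v₁ = w₀
  · rw [if_pos h] at hv₁p; linarith
  · rw [if_neg h] at hv₁p; linarith

end STW
namespace STW

open Matrix Finset

variable {n : ℕ}

/-- Corner point: a point on the codim-2 intersection of two walls of a chamber,
strictly on the chamber side of every hyperplane not containing the intersection. -/
lemma corner {A : Finset (V n)} (hA : IsArrangement A) (hsimp : IsSimplicial A)
    {c' : V n → Bool} {y₀ : V n} (hy₀ : Realizes A c' y₀) {H G' : V n}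
    (hH : IsWall A c' H) (hG' : IsWall A c' G') :
    ∃ ξ : V n, (∀ v ∈ loc A H G', v ⬝ᵥ ξ = 0) ∧
      ∀ v ∈ A, v ∉ loc A H G' → 0 < sg c' v ⬝ᵥ ξ := by
  classical
  obtain ⟨hli, -⟩ := hsimp c' ⟨y₀, hy₀⟩
  obtain ⟨ξ, hξ⟩ := exists_dot_eq (wallsF A c') (wallsF_indep hli)
    (fun w => if w = H ∨ w = G' then 0 else (if c' w then 1 else -1))
  have hsgξ : ∀ w ∈ wallsF A c', sg c' w ⬝ᵥ ξ = if w = H ∨ w = G' then 0 else 1 := by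
    intro w hw
    rw [sg_eq_smul, smul_dotProduct, smul_eq_mul, hξ w hw]
    by_cases h1 : (w = H ∨ w = G')
    · simp [h1]
    · by_cases h2 : c' w <;> simp [h1, h2]
  have hHξ : H ⬝ᵥ ξ = 0 := by
    have := hξ H (mem_wallsF.2 hH)
    simpa using this
  have hGξ : G' ⬝ᵥ ξ = 0 := by
    have := hξ G' (mem_wallsF.2 hG')
    simpa using this
  refine ⟨ξ, ?_, ?_⟩
  · intro v hv
    obtain ⟨a, b, hab⟩ := Submodule.mem_span_pair.1 (mem_loc_iff_span.1 hv).2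
    rw [← hab, add_dotProduct, smul_dotProduct, smul_dotProduct, smul_eq_mul, smul_eq_mul,
      hHξ, hGξ, mul_zero, mul_zero, add_zero]
  · intro v hvA hvloc
    obtain ⟨μ, hμnn, hμsum⟩ := crux hA hsimp hy₀ hvA
    rw [← hμsum, sum_dot]
    have hterm : ∀ w ∈ wallsF A c', (μ w • sg c' w) ⬝ᵥ ξ
        = if w = H ∨ w = G' then 0 else μ w := by
      intro w hw
      rw [smul_dotProduct, smul_eq_mul, hsgξ w hw]
      by_cases h : (w = H ∨ w = G') <;> simp [h]
    rw [Finset.sum_congr rfl hterm]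
    have hnn : (0:ℝ) ≤ ∑ w ∈ wallsF A c', if w = H ∨ w = G' then 0 else μ w := by
      apply Finset.sum_nonneg
      intro w hw
      by_cases h : (w = H ∨ w = G')
      · simp [h]
      · simpa [h] using hμnn w hw
    rcases lt_or_eq_of_le hnn with h | h
    · exact h
    · exfalso
      have hzero : ∀ w ∈ wallsF A c', (if w = H ∨ w = G' then 0 else μ w) = 0 := by
        have := (Finset.sum_eq_zero_iff_of_nonneg (by
          intro w hw
          by_cases h' : (w = H ∨ w = G')
          · simp [h']
          · simpa [h'] using hμnn w hw)).1 h.symm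
        exact this
      have hvmem : sg c' v ∈ Submodule.span ℝ ({H, G'} : Set (V n)) := by
        rw [← hμsum]
        apply Submodule.sum_mem
        intro w hw
        by_cases h1 : w = H
        · subst h1
          apply Submodule.smul_mem
          rcases sg_eq_or c' w with he | he <;> rw [he]
          · exact Submodule.subset_span (by simp)
          · exact Submodule.neg_mem _ (Submodule.subset_span (by simp))
        · by_cases h2 : w = G'
          · subst h2
            apply Submodule.smul_mem
            rcases sg_eq_or c' w with he | he <;> rw [he]
            · exact Submodule.subset_span (by simp)
            · exact Submodule.neg_mem _ (Submodule.subset_span (by simp))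
          · have := hzero w hw
            rw [if_neg (by tauto)] at this
            rw [this, zero_smul]
            exact Submodule.zero_mem _
      apply hvloc
      apply mem_loc_iff_span.2
      refine ⟨hvA, ?_⟩
      rcases sg_eq_or c' v with he | he <;> rw [he] at hvmem
      · exact hvmem
      · have := Submodule.neg_mem _ hvmem
        rwa [neg_neg] at this
  
end STW
namespace STW

open Matrix Finset

variable {n : ℕ}

/-- The 2D orientation form associated with the basis pair `(a, b)`. -/
def om (a b z w : V n) : ℝ := (a ⬝ᵥ z) * (b ⬝ᵥ w) - (b ⬝ᵥ z) * (a ⬝ᵥ w)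

lemma om_swap (a b z w : V n) : om b a z w = - om a b z w := by unfold om; ring

lemma om_self (a b z : V n) : om a b z z = 0 := by unfold om; ring

lemma om_anti (a b z w : V n) : om a b z w = - om a b w z := by unfold om; ring

lemma span_dot_zero {a b z : V n} (hz : z ∈ Submodule.span ℝ ({a, b} : Set (V n)))
    (ha : a ⬝ᵥ z = 0) (hb : b ⬝ᵥ z = 0) : z = 0 := by
  obtain ⟨s, t, hst⟩ := Submodule.mem_span_pair.1 hz
  have h0 : (s • a + t • b) ⬝ᵥ z = 0 := by
    rw [add_dotProduct, smul_dotProduct, smul_dotProduct, smul_eq_mul, smul_eq_mul,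
      ha, hb, mul_zero, mul_zero, add_zero]
  rw [hst] at h0
  exact dotProduct_self_eq_zero.1 h0

lemma om_jacobi {a b : V n} {u v w : V n}
    (hu : u ∈ Submodule.span ℝ ({a, b} : Set (V n)))
    (hv : v ∈ Submodule.span ℝ ({a, b} : Set (V n)))
    (hw : w ∈ Submodule.span ℝ ({a, b} : Set (V n))) :
    om a b u v • w - om a b u w • v + om a b v w • u = 0 := by
  have hJspan : om a b u v • w - om a b u w • v + om a b v w • u
      ∈ Submodule.span ℝ ({a, b} : Set (V n)) :=
    Submodule.add_mem _ (Submodule.sub_mem _ (Submodule.smul_mem _ _ hw)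
      (Submodule.smul_mem _ _ hv)) (Submodule.smul_mem _ _ hu)
  have haJ : a ⬝ᵥ (om a b u v • w - om a b u w • v + om a b v w • u) = 0 := by
    rw [dotProduct_add, dotProduct_sub, dotProduct_smul, dotProduct_smul, dotProduct_smul]
    simp only [smul_eq_mul, om]
    ring
  have hbJ : b ⬝ᵥ (om a b u v • w - om a b u w • v + om a b v w • u) = 0 := by
    rw [dotProduct_add, dotProduct_sub, dotProduct_smul, dotProduct_smul, dotProduct_smul]
    simp only [smul_eq_mul, om]
    ring
  exact span_dot_zero hJspan haJ hbJ

lemma om_pos_trans {a b x₀ : V n} {u v w : V n}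
    (hu : u ∈ Submodule.span ℝ ({a, b} : Set (V n)))
    (hv : v ∈ Submodule.span ℝ ({a, b} : Set (V n)))
    (hw : w ∈ Submodule.span ℝ ({a, b} : Set (V n)))
    (hux : 0 < u ⬝ᵥ x₀) (hvx : 0 < v ⬝ᵥ x₀) (hwx : 0 < w ⬝ᵥ x₀)
    (h1 : 0 < om a b u v) (h2 : 0 < om a b v w) : 0 < om a b u w := by
  have hJ := om_jacobi hu hv hw
  have hdot := congrArg (fun q => q ⬝ᵥ x₀) hJ
  simp only [add_dotProduct, sub_dotProduct, smul_dotProduct, smul_eq_mul,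
    zero_dotProduct] at hdot
  nlinarith [mul_pos h1 hwx, mul_pos h2 hux, hvx]

lemma om_eq_zero_prop {a b : V n} {u v : V n}
    (hu : u ∈ Submodule.span ℝ ({a, b} : Set (V n)))
    (hv : v ∈ Submodule.span ℝ ({a, b} : Set (V n)))
    (hu0 : u ≠ 0) (h : om a b u v = 0) : ∃ l : ℝ, v = l • u := by
  unfold om at h
  by_cases hau : a ⬝ᵥ u = 0
  · have hbu : b ⬝ᵥ u ≠ 0 := by
      intro h'
      exact hu0 (span_dot_zero hu hau h')
    refine ⟨(b ⬝ᵥ v) / (b ⬝ᵥ u), ?_⟩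
    have hsub : v - ((b ⬝ᵥ v) / (b ⬝ᵥ u)) • u = 0 := by
      apply span_dot_zero (Submodule.sub_mem _ hv (Submodule.smul_mem _ _ hu))
      · rw [dotProduct_sub, dotProduct_smul, smul_eq_mul, hau, mul_zero, sub_zero]
        -- a⬝v = 0 since (b⬝u)*(a⬝v) = 0
        have : (b ⬝ᵥ u) * (a ⬝ᵥ v) = 0 := by rw [hau] at h; linarith
        exact (mul_eq_zero.1 this).resolve_left hbu
      · rw [dotProduct_sub, dotProduct_smul, smul_eq_mul]
        field_simp
        ring
    rw [sub_eq_zero] at hsub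
    exact hsub
  · refine ⟨(a ⬝ᵥ v) / (a ⬝ᵥ u), ?_⟩
    have hsub : v - ((a ⬝ᵥ v) / (a ⬝ᵥ u)) • u = 0 := by
      apply span_dot_zero (Submodule.sub_mem _ hv (Submodule.smul_mem _ _ hu))
      · rw [dotProduct_sub, dotProduct_smul, smul_eq_mul]
        field_simp
        ring
      · rw [dotProduct_sub, dotProduct_smul, smul_eq_mul]
        field_simp
        nlinarith [h]
    rw [sub_eq_zero] at hsub
    exact hsub

lemma om_ne_zero_of_ne {A : Finset (V n)} (hA : IsArrangement A) {a b : V n}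
    {c₀ : V n → Bool} {u v : V n} (hu : u ∈ A) (hv : v ∈ A)
    (hus : sg c₀ u ∈ Submodule.span ℝ ({a, b} : Set (V n)))
    (hvs : sg c₀ v ∈ Submodule.span ℝ ({a, b} : Set (V n)))
    (hne : u ≠ v) : om a b (sg c₀ u) (sg c₀ v) ≠ 0 := by
  intro h0
  obtain ⟨l, hl⟩ := om_eq_zero_prop hus hvs (sg_ne_zero (hA.1 u hu)) h0
  have hl0 : l ≠ 0 := by
    intro h
    rw [h, zero_smul] at hl
    exact sg_ne_zero (hA.1 v hv) hl
  rw [sg_eq_smul c₀ v, sg_eq_smul c₀ u, smul_smul] at hl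
  set ev := if c₀ v then (1:ℝ) else -1 with hev
  set eu := if c₀ u then (1:ℝ) else -1 with heu
  have hev0 : ev ≠ 0 := by rw [hev]; exact sg_coef_ne c₀ v
  have hveq : v = (ev⁻¹ * (l * eu)) • u := by
    calc v = ev⁻¹ • (ev • v) := by rw [smul_smul, inv_mul_cancel₀ hev0, one_smul]
      _ = ev⁻¹ • ((l * eu) • u) := by rw [hl]
      _ = (ev⁻¹ * (l * eu)) • u := by rw [smul_smul]
  have : u = v := eq_of_smul_mem hA hu hv
    (by
      apply mul_ne_zero (inv_ne_zero hev0)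
      apply mul_ne_zero hl0
      rw [heu]; exact sg_coef_ne c₀ u) hveq
  exact hne this

lemma exists_om_max {A : Finset (V n)} (hA : IsArrangement A) {a b x₀ : V n}
    (c₀ : V n → Bool) (L : Finset (V n)) (hLA : L ⊆ A) (hLne : L.Nonempty)
    (hspan : ∀ v ∈ L, sg c₀ v ∈ Submodule.span ℝ ({a, b} : Set (V n)))
    (hpos : ∀ v ∈ L, 0 < sg c₀ v ⬝ᵥ x₀) :
    ∃ ρ ∈ L, ∀ v ∈ L, v ≠ ρ → 0 < om a b (sg c₀ v) (sg c₀ ρ) := by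
  classical
  induction L using Finset.induction_on with
  | empty => exact absurd hLne (by simp)
  | @insert a₀ s ha₀ IH =>
    rcases s.eq_empty_or_nonempty with rfl | hsne
    · refine ⟨a₀, Finset.mem_insert_self _ _, ?_⟩
      intro v hv hvne
      rcases Finset.mem_insert.1 hv with h | h
      · exact absurd h hvne
      · exact absurd h (by simp)
    · obtain ⟨ρ, hρs, hρmax⟩ := IH
        (fun v hv => hLA (Finset.mem_insert_of_mem hv)) hsne
        (fun v hv => hspan v (Finset.mem_insert_of_mem hv))
        (fun v hv => hpos v (Finset.mem_insert_of_mem hv))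
      have ha₀A : a₀ ∈ A := hLA (Finset.mem_insert_self _ _)
      have hρA : ρ ∈ A := hLA (Finset.mem_insert_of_mem hρs)
      have ha₀ρ : a₀ ≠ ρ := by rintro rfl; exact ha₀ hρs
      have hnd := om_ne_zero_of_ne hA ha₀A hρA
        (hspan a₀ (Finset.mem_insert_self _ _))
        (hspan ρ (Finset.mem_insert_of_mem hρs)) ha₀ρ
      rcases lt_or_gt_of_ne hnd with hlt | hgt
      · -- om (sg a₀) (sg ρ) < 0, so a₀ is the new maximum
        refine ⟨a₀, Finset.mem_insert_self _ _, ?_⟩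
        intro v hv hvne
        rcases Finset.mem_insert.1 hv with h | h
        · exact absurd h hvne
        · by_cases hvρ : v = ρ
          · subst hvρ
            rw [om_anti] at hlt
            linarith
          · apply om_pos_trans (hspan v (Finset.mem_insert_of_mem h))
              (hspan ρ (Finset.mem_insert_of_mem hρs))
              (hspan a₀ (Finset.mem_insert_self _ _))
              (hpos v (Finset.mem_insert_of_mem h))
              (hpos ρ (Finset.mem_insert_of_mem hρs))
              (hpos a₀ (Finset.mem_insert_self _ _))
              (hρmax v h hvρ)
              (by rw [om_anti] at hlt; linarith)
      · -- om (sg a₀) (sg ρ) > 0, so ρ stays maximal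
        refine ⟨ρ, Finset.mem_insert_of_mem hρs, ?_⟩
        intro v hv hvne
        rcases Finset.mem_insert.1 hv with h | h
        · subst h; exact hgt
        · exact hρmax v h hvne

end STW
namespace STW

open Matrix Finset

variable {n : ℕ}

lemma indep_of_mem_ne {A : Finset (V n)} (hA : IsArrangement A) {u w : V n}
    (hu : u ∈ A) (hw : w ∈ A) (hne : u ≠ w) : LinearIndependent ℝ ![u, w] := by
  rw [linearIndependent_fin2]
  constructor
  · simpa using hA.1 w hw
  · intro l hl
    simp only [Matrix.cons_val_one, Matrix.head_cons, Matrix.cons_val_zero] at hl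
    have hl0 : l ≠ 0 := by
      rintro rfl
      rw [zero_smul] at hl
      exact hA.1 u hu hl.symm
    exact hne (eq_of_smul_mem hA hw hu hl0 hl.symm).symm

lemma sg_mem_span_iff {c₀ : V n → Bool} {v : V n} {S : Set (V n)} :
    sg c₀ v ∈ Submodule.span ℝ S ↔ v ∈ Submodule.span ℝ S := by
  rcases sg_eq_or c₀ v with h | h <;> rw [h]
  constructor
  · intro hmem
    have := Submodule.neg_mem _ hmem
    rwa [neg_neg] at this
  · intro hmem
    exact Submodule.neg_mem _ hmem

end STW
open STW in
theorem simplicial_twoClosed_walls {n : ℕ} (A : Finset (V n)) (hA : IsArrangement A)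
    (c₀ : V n → Bool) (hc₀ : IsChamber A c₀) (hsimp : IsSimplicial A)
    (I : Finset (V n)) (hIA : I ⊆ A) (h2c : Is2Closed A c₀ I)
    (hwalls : ∀ v, IsWall A c₀ v → v ∈ I) :
    I = A := by
  classical
  obtain ⟨x₀, hx₀⟩ := hc₀
  have hx₀' : ∀ v ∈ A, 0 < sg c₀ v ⬝ᵥ x₀ := realizes_iff.1 hx₀
  -- sign characterization of separation at a realizer
  have hsep_char : ∀ (c : V n → Bool) (y : V n), Realizes A c y → ∀ v ∈ A,
      (v ∈ SepSet A c₀ c ↔ sg c₀ v ⬝ᵥ y < 0) := by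
    intro c y hy v hv
    have hcy := realizes_iff.1 hy v hv
    constructor
    · intro hsep
      have hne := (mem_sepSet_iff.1 hsep).2
      have h1 : sg c₀ v = - sg c v := sg_eq_neg_of_ne hne
      rw [h1, neg_dotProduct]
      linarith
    · intro hneg
      refine mem_sepSet_iff.2 ⟨hv, ?_⟩
      intro heq
      have h1 : sg c₀ v = sg c v := sg_eq_of_eq heq
      rw [h1] at hneg
      linarith
  have main : ∀ k : ℕ, ∀ H, H ∈ A →
      (∃ c y, Realizes A c y ∧ H ∈ SepSet A c₀ c ∧ (SepSet A c₀ c).card ≤ k) → H ∈ I := by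
    intro k
    induction k using Nat.strong_induction_on with
    | _ k IH =>
    rintro H hHA ⟨c, y, hcy, hHsep, hcard⟩
    have hcpos : 1 ≤ (SepSet A c₀ c).card := Finset.card_pos.2 ⟨H, hHsep⟩
    by_cases hcard1 : (SepSet A c₀ c).card = 1
    · -- base case: H is a wall of c₀
      obtain ⟨bb, hbb⟩ := Finset.card_eq_one.1 hcard1
      have hHy : sg c₀ H ⬝ᵥ y < 0 := (hsep_char c y hcy H hHA).1 hHsep
      obtain ⟨w₁, hw₁A, hw₁y, hw₁wall, -⟩ := fc hA hx₀ y ⟨H, hHA, hHy⟩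
      have hw₁sep : w₁ ∈ SepSet A c₀ c := (hsep_char c y hcy w₁ hw₁A).2 hw₁y
      have hw₁H : w₁ = H := by
        rw [hbb] at hw₁sep hHsep
        rw [Finset.mem_singleton] at hw₁sep hHsep
        rw [hw₁sep, hHsep]
      exact hwalls H (hw₁H ▸ hw₁wall)
    · -- inductive case
      have hcard2 : 2 ≤ (SepSet A c₀ c).card := by omega
      have hkge : 2 ≤ k := le_trans hcard2 hcard
      -- first crossing from c towards x₀
      have hHne := (mem_sepSet_iff.1 hHsep).2
      have hHx₀ : sg c H ⬝ᵥ x₀ < 0 := by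
        have h1 : sg c H = - sg c₀ H := sg_eq_neg_of_ne (Ne.symm hHne)
        rw [h1, neg_dotProduct]
        linarith [hx₀' H hHA]
      obtain ⟨v₁, hv₁A, hv₁x₀, hv₁wall, z, hz0, hzpos⟩ := fc hA hcy x₀ ⟨H, hHA, hHx₀⟩
      have hv₁sep : v₁ ∈ SepSet A c₀ c := by
        refine mem_sepSet_iff.2 ⟨hv₁A, ?_⟩
        intro heq
        have := hx₀' v₁ hv₁A
        rw [sg_eq_of_eq heq] at this
        linarith
      obtain ⟨y', hy'⟩ := flip_chamber hA hv₁A hz0 hzpos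
      have hsep' : SepSet A c₀ (flip c v₁) = (SepSet A c₀ c).erase v₁ :=
        sep_flip c₀ c hv₁sep
      by_cases hv₁H : v₁ = H
      · -- v₁ = H : H is a wall of c; proceed with the corner argument
        subst hv₁H
        have hc'card : (SepSet A c₀ (flip c v₁)).card = (SepSet A c₀ c).card - 1 := by
          rw [hsep', Finset.card_erase_of_mem hv₁sep]
        -- all of Sep' is in I
        have hSep'I : ∀ v ∈ SepSet A c₀ (flip c v₁), v ∈ I := by
          intro v hv
          have hvA : v ∈ A := (mem_sepSet_iff.1 hv).1
          exact IH ((SepSet A c₀ c).card - 1) (by omega) v hvA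
            ⟨flip c v₁, y', hy', hv, by omega⟩
        -- H (= v₁) is a wall of the flipped chamber c'
        have hHwall' : IsWall A (flip c v₁) v₁ := by
          refine ⟨hv₁A, z, hz0, ?_⟩
          intro w hw hsame
          have hwne : w ≠ v₁ := by
            rintro rfl
            exact hsame (fun x => Iff.rfl)
          rw [← sg_dot_pos_iff, sg_flip_ne c v₁ hwne]
          exact hzpos w hw hwne
        -- get a wall G' of c' separating c' from c₀
        have hSep'ne : ∃ v ∈ A, sg (flip c v₁) v ⬝ᵥ x₀ < 0 := by
          have hne : ((SepSet A c₀ c).erase v₁).Nonempty := by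
            rw [← hsep']
            rw [← Finset.card_pos, hc'card]
            omega
          obtain ⟨v, hv⟩ := hne
          rw [← hsep'] at hv
          have hvA : v ∈ A := (mem_sepSet_iff.1 hv).1
          have h1 : sg c₀ v ⬝ᵥ x₀ > 0 := hx₀' v hvA
          have h2 : sg (flip c v₁) v = - sg c₀ v :=
            sg_eq_neg_of_ne (Ne.symm (mem_sepSet_iff.1 hv).2)
          exact ⟨v, hvA, by rw [h2, neg_dotProduct]; linarith⟩
        obtain ⟨G', hG'A, hG'x₀, hG'wall, zG, hzG0, hzGpos⟩ := fc hA hy' x₀ hSep'ne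
        have hG'sep : G' ∈ SepSet A c₀ (flip c v₁) := by
          refine mem_sepSet_iff.2 ⟨hG'A, ?_⟩
          intro heq
          have h6 := hx₀' G' hG'A
          rw [sg_eq_of_eq heq] at h6
          linarith
        have hG'I : G' ∈ I := hSep'I G' hG'sep
        have hG'H : G' ≠ v₁ := by
          have := hsep' ▸ hG'sep
          exact (Finset.mem_erase.1 this).1
        -- corner point at X = ker v₁ ∩ ker G'
        obtain ⟨ξ, hξ0, hξpos⟩ := corner hA hsimp hy' hHwall' hG'wall
        have hHL : v₁ ∈ loc A v₁ G' := mem_loc_left hv₁A G'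
        have hG'L : G' ∈ loc A v₁ G' := mem_loc_right hG'A v₁
        have hLA' : loc A v₁ G' ⊆ A := loc_subset A v₁ G'
        have hLspan : ∀ v ∈ loc A v₁ G', sg c₀ v ∈ Submodule.span ℝ ({v₁, G'} : Set (V n)) :=
          fun v hv => sg_mem_span_iff.2 (mem_loc_iff_span.1 hv).2
        have hLpos : ∀ v ∈ loc A v₁ G', 0 < sg c₀ v ⬝ᵥ x₀ := fun v hv => hx₀' v (hLA' hv)
        -- oriented basis
        have hndHG : om v₁ G' (sg c₀ G') (sg c₀ v₁) ≠ 0 :=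
          om_ne_zero_of_ne hA hG'A hv₁A (hLspan G' hG'L) (hLspan v₁ hHL) hG'H
        obtain ⟨a, b, hset, hor⟩ : ∃ a b : V n, ({a, b} : Set (V n)) = {v₁, G'} ∧
            0 < om a b (sg c₀ G') (sg c₀ v₁) := by
          rcases lt_or_gt_of_ne hndHG with hlt | hgt
          · refine ⟨G', v₁, Set.pair_comm G' v₁, ?_⟩
            rw [om_swap]; linarith
          · exact ⟨v₁, G', rfl, hgt⟩
        have hLspanab : ∀ v ∈ loc A v₁ G',
            sg c₀ v ∈ Submodule.span ℝ ({a, b} : Set (V n)) := by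
          intro v hv; rw [hset]; exact hLspan v hv
        -- the maximal element of the localization
        obtain ⟨ρ, hρL, hρmax⟩ := exists_om_max hA c₀ (loc A v₁ G') hLA' ⟨v₁, hHL⟩
          hLspanab hLpos
        have hρA : ρ ∈ A := hLA' hρL
        -- epsilon for the rank-2 chamber construction
        obtain ⟨ε, hε0, hεlt⟩ : ∃ ε : ℝ, 0 < ε ∧ ∀ v ∈ (loc A v₁ G').erase ρ,
            ε * (sg c₀ v ⬝ᵥ x₀) < om a b (sg c₀ v) (sg c₀ ρ) := by
          rcases ((loc A v₁ G').erase ρ).eq_empty_or_nonempty with he | hne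
          · exact ⟨1, one_pos, by rw [he]; simp⟩
          · have hratio : ∀ v ∈ (loc A v₁ G').erase ρ,
                0 < om a b (sg c₀ v) (sg c₀ ρ) / (sg c₀ v ⬝ᵥ x₀) := by
              intro v hv
              obtain ⟨hvne, hvL⟩ := Finset.mem_erase.1 hv
              exact div_pos (hρmax v hvL hvne) (hLpos v hvL)
            refine ⟨((loc A v₁ G').erase ρ).inf' hne
              (fun v => om a b (sg c₀ v) (sg c₀ ρ) / (sg c₀ v ⬝ᵥ x₀)) / 2, ?_, ?_⟩
            · apply div_pos _ two_pos
              rw [Finset.lt_inf'_iff]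
              exact hratio
            · intro v hv
              obtain ⟨hvne, hvL⟩ := Finset.mem_erase.1 hv
              have hpx := hLpos v hvL
              have h1 := Finset.inf'_le (fun v => om a b (sg c₀ v) (sg c₀ ρ) / (sg c₀ v ⬝ᵥ x₀)) hv
              have h2 := hratio v hv
              have h3 : ((loc A v₁ G').erase ρ).inf' hne
                  (fun v => om a b (sg c₀ v) (sg c₀ ρ) / (sg c₀ v ⬝ᵥ x₀)) / 2
                  < om a b (sg c₀ v) (sg c₀ ρ) / (sg c₀ v ⬝ᵥ x₀) := by
                linarith
              calc (((loc A v₁ G').erase ρ).inf' hne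
                    (fun v => om a b (sg c₀ v) (sg c₀ ρ) / (sg c₀ v ⬝ᵥ x₀)) / 2)
                    * (sg c₀ v ⬝ᵥ x₀)
                  < (om a b (sg c₀ v) (sg c₀ ρ) / (sg c₀ v ⬝ᵥ x₀)) * (sg c₀ v ⬝ᵥ x₀) :=
                    mul_lt_mul_of_pos_right h3 hpx
                _ = om a b (sg c₀ v) (sg c₀ ρ) := div_mul_cancel₀ _ hpx.ne'
        -- the rank-2 direction y2
        have hindab : LinearIndependent ℝ ![a, b] := by
          have haA : a ∈ A := by
            rcases Set.mem_insert_iff.1 (by rw [← hset]; exact Set.mem_insert a {b} :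
                a ∈ ({v₁, G'} : Set (V n))) with h | h
            · rw [h]; exact hv₁A
            · rw [Set.mem_singleton_iff.1 h]; exact hG'A
          have hbA : b ∈ A := by
            rcases Set.mem_insert_iff.1 (by rw [← hset]; exact Set.mem_insert_of_mem a rfl :
                b ∈ ({v₁, G'} : Set (V n))) with h | h
            · rw [h]; exact hv₁A
            · rw [Set.mem_singleton_iff.1 h]; exact hG'A
          have hab : a ≠ b := by
            intro h
            -- then {a} = {v₁, G'} forces v₁ = G'
            apply hG'H
            have h1 : v₁ ∈ ({a, b} : Set (V n)) := by rw [hset]; exact Set.mem_insert _ _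
            have h2 : G' ∈ ({a, b} : Set (V n)) := by
              rw [hset]; exact Set.mem_insert_of_mem _ rfl
            rw [← h] at h1 h2
            simp only [Set.mem_insert_iff, Set.mem_singleton_iff, or_self] at h1 h2
            rw [h2, h1]
          exact indep_of_mem_ne hA haA hbA hab
        obtain ⟨y2, hy2a, hy2b⟩ := exists_dot_pair hindab
          (om a b a (sg c₀ ρ) - ε * (a ⬝ᵥ x₀))
          (om a b b (sg c₀ ρ) - ε * (b ⬝ᵥ x₀))
        have heval : ∀ w ∈ Submodule.span ℝ ({a, b} : Set (V n)),
            w ⬝ᵥ y2 = om a b w (sg c₀ ρ) - ε * (w ⬝ᵥ x₀) := by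
          intro w hw
          obtain ⟨s, t, hst⟩ := Submodule.mem_span_pair.1 hw
          rw [← hst, add_dotProduct, smul_dotProduct, smul_dotProduct, smul_eq_mul,
            smul_eq_mul, hy2a, hy2b]
          unfold om
          rw [dotProduct_add, dotProduct_add, dotProduct_smul, dotProduct_smul,
            dotProduct_smul, dotProduct_smul, add_dotProduct, smul_dotProduct,
            smul_dotProduct]
          simp only [smul_eq_mul]
          ring
        have hval : ∀ v ∈ loc A v₁ G',
            sg c₀ v ⬝ᵥ y2 = om a b (sg c₀ v) (sg c₀ ρ) - ε * (sg c₀ v ⬝ᵥ x₀) :=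
          fun v hv => heval _ (hLspanab v hv)
        have hρy2 : sg c₀ ρ ⬝ᵥ y2 < 0 := by
          rw [hval ρ hρL, om_self]
          have := hLpos ρ hρL
          nlinarith
        have hvy2 : ∀ v ∈ loc A v₁ G', v ≠ ρ → 0 < sg c₀ v ⬝ᵥ y2 := by
          intro v hv hne
          rw [hval v hv]
          have := hεlt v (Finset.mem_erase.2 ⟨hne, hv⟩)
          linarith
        -- the lifted chamber d
        set d : V n → Bool := fun v =>
          if v ∈ loc A v₁ G' then (if 0 < sg c₀ v ⬝ᵥ y2 then c₀ v else !(c₀ v)) else flip c v₁ v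
          with hd
        obtain ⟨δ₀, hδ₀, hpertd⟩ := pert (A.filter (fun v => v ∉ loc A v₁ G')) (flip c v₁) ξ y2
          (fun v hv => hξpos v (Finset.mem_filter.1 hv).1 (Finset.mem_filter.1 hv).2)
        have hδpos : 0 < δ₀ / 2 := by linarith
        have hrd : Realizes A d (ξ + (δ₀ / 2) • y2) := by
          rw [realizes_iff]
          intro v hv
          by_cases hvL : v ∈ loc A v₁ G'
          · have hvξ : v ⬝ᵥ ξ = 0 := hξ0 v hvL
            have hsgξ0 : sg d v ⬝ᵥ ξ = 0 := by
              rcases sg_eq_or d v with h | h <;> rw [h]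
              · exact hvξ
              · rw [neg_dotProduct, hvξ, neg_zero]
            have hx2 : sg d v ⬝ᵥ (ξ + (δ₀ / 2) • y2) = (δ₀ / 2) * (sg d v ⬝ᵥ y2) := by
              rw [dotProduct_add, hsgξ0, dotProduct_smul, smul_eq_mul, zero_add]
            rw [hx2]
            apply mul_pos hδpos
            by_cases hvy : 0 < sg c₀ v ⬝ᵥ y2
            · have hdv : d v = c₀ v := by
                rw [hd]
                simp only
                rw [if_pos hvL, if_pos hvy]
              have h1 : sg d v = sg c₀ v := sg_eq_of_eq hdv
              rw [h1]
              exact hvy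
            · have hvρ : v = ρ := by
                by_contra hne
                exact hvy (hvy2 v hvL hne)
              subst hvρ
              have hdv : d v = !(c₀ v) := by
                rw [hd]
                simp only
                rw [if_pos hvL, if_neg hvy]
              have h1 : sg d v = - sg c₀ v := by
                apply sg_eq_neg_of_ne
                rw [hdv]
                cases c₀ v <;> simp
              rw [h1, neg_dotProduct]
              linarith [hρy2]
          · have hdv : d v = flip c v₁ v := by
              rw [hd]
              simp only
              rw [if_neg hvL]
            have h1 : sg d v = sg (flip c v₁) v := sg_eq_of_eq hdv
            rw [h1]
            exact hpertd (δ₀ / 2) (by rw [abs_of_pos hδpos]; linarith) v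
              (Finset.mem_filter.2 ⟨hv, hvL⟩)
        -- separation set of d
        have hsepd : SepSet A c₀ d
            = insert ρ ((SepSet A c₀ (flip c v₁)).filter (fun v => v ∉ loc A v₁ G')) := by
          ext v
          rw [mem_sepSet_iff, Finset.mem_insert, Finset.mem_filter, mem_sepSet_iff]
          by_cases hvL : v ∈ loc A v₁ G'
          · constructor
            · rintro ⟨hvA, hvne⟩
              left
              by_contra hvρ
              apply hvne
              rw [hd]
              simp only
              rw [if_pos hvL, if_pos (hvy2 v hvL hvρ)]
            · rintro (rfl | ⟨⟨hvA, hvne⟩, hnl⟩)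
              · refine ⟨hρA, ?_⟩
                rw [hd]
                simp only
                rw [if_pos hvL, if_neg (by linarith [hρy2] : ¬ 0 < sg c₀ v ⬝ᵥ y2)]
                cases c₀ v <;> simp
              · exact absurd hvL hnl
          · constructor
            · rintro ⟨hvA, hvne⟩
              right
              refine ⟨⟨hvA, ?_⟩, hvL⟩
              rw [hd] at hvne
              simp only at hvne
              rw [if_neg hvL] at hvne
              exact hvne
            · rintro (rfl | ⟨⟨hvA, hvne⟩, -⟩)
              · exact absurd hρL hvL
              · refine ⟨hvA, ?_⟩
                rw [hd]
                simp only
                rw [if_neg hvL]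
                exact hvne
        have hρsepd : ρ ∈ SepSet A c₀ d := by
          rw [hsepd]; exact Finset.mem_insert_self _ _
        have hcardd : (SepSet A c₀ d).card ≤ (SepSet A c₀ c).card - 1 := by
          have hsub : (SepSet A c₀ (flip c v₁)).filter (fun v => v ∉ loc A v₁ G')
              ⊆ (SepSet A c₀ (flip c v₁)).erase G' := by
            intro v hv
            obtain ⟨h1, h2⟩ := Finset.mem_filter.1 hv
            exact Finset.mem_erase.2 ⟨fun h => h2 (h ▸ hG'L), h1⟩
          have h1 : ((SepSet A c₀ (flip c v₁)).erase G').card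
              = (SepSet A c₀ (flip c v₁)).card - 1 :=
            Finset.card_erase_of_mem hG'sep
          have h2 := Finset.card_le_card hsub
          have h3 := Finset.card_insert_le ρ
            ((SepSet A c₀ (flip c v₁)).filter (fun v => v ∉ loc A v₁ G'))
          rw [hsepd]
          omega
        -- if ρ = v₁ (= H) we are done by IH
        by_cases hρH : ρ = v₁
        · subst hρH
          exact IH ((SepSet A c₀ c).card - 1) (by omega) ρ hρA
            ⟨d, ξ + (δ₀ / 2) • y2, hrd, hρsepd, by omega⟩
        · have hρI : ρ ∈ I := IH ((SepSet A c₀ c).card - 1) (by omega) ρ hρA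
            ⟨d, ξ + (δ₀ / 2) • y2, hrd, hρsepd, by omega⟩
          -- positive decomposition sg H = β • sg ρ + α • sg G'
          have hHρpos : 0 < om a b (sg c₀ v₁) (sg c₀ ρ) :=
            hρmax v₁ hHL (fun h => hρH h.symm)
          have hρG' : ρ ≠ G' := by
            intro h
            rw [h] at hHρpos
            rw [om_anti] at hHρpos
            linarith
          have htrans : 0 < om a b (sg c₀ G') (sg c₀ ρ) :=
            om_pos_trans (hLspanab G' hG'L) (hLspanab v₁ hHL) (hLspanab ρ hρL)
              (hLpos G' hG'L) (hLpos v₁ hHL) (hLpos ρ hρL) hor hHρpos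
          have hJ := om_jacobi (hLspanab G' hG'L) (hLspanab v₁ hHL) (hLspanab ρ hρL)
          have h2 : om a b (sg c₀ G') (sg c₀ ρ) • sg c₀ v₁
              = om a b (sg c₀ G') (sg c₀ v₁) • sg c₀ ρ
                + om a b (sg c₀ v₁) (sg c₀ ρ) • sg c₀ G' := by
            have h3 := congrArg
              (fun q => q + om a b (sg c₀ G') (sg c₀ ρ) • sg c₀ v₁) hJ
            simp only [zero_add] at h3
            rw [← h3]
            abel
          have hdecomp : sg c₀ v₁
              = (om a b (sg c₀ G') (sg c₀ v₁) / om a b (sg c₀ G') (sg c₀ ρ)) • sg c₀ ρ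
                + (om a b (sg c₀ v₁) (sg c₀ ρ) / om a b (sg c₀ G') (sg c₀ ρ)) • sg c₀ G' := by
            calc sg c₀ v₁
                = (om a b (sg c₀ G') (sg c₀ ρ))⁻¹
                    • (om a b (sg c₀ G') (sg c₀ ρ) • sg c₀ v₁) := by
                  rw [smul_smul, inv_mul_cancel₀ htrans.ne', one_smul]
              _ = (om a b (sg c₀ G') (sg c₀ ρ))⁻¹
                    • (om a b (sg c₀ G') (sg c₀ v₁) • sg c₀ ρ
                      + om a b (sg c₀ v₁) (sg c₀ ρ) • sg c₀ G') := by rw [h2]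
              _ = _ := by
                  rw [smul_add, smul_smul, smul_smul, div_eq_inv_mul, div_eq_inv_mul]
          have hβpos : 0 < om a b (sg c₀ G') (sg c₀ v₁) / om a b (sg c₀ G') (sg c₀ ρ) :=
            div_pos hor htrans
          have hαpos : 0 < om a b (sg c₀ v₁) (sg c₀ ρ) / om a b (sg c₀ G') (sg c₀ ρ) :=
            div_pos hHρpos htrans
          -- Final step: 2-closedness at (G', ρ) forces v₁ ∈ I
          by_contra hHI
          have hcodim : Codim2 A G' ρ :=
            ⟨hG'A, hρA, indep_of_mem_ne hA hG'A hρA (Ne.symm hρG')⟩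
          have hHloc : v₁ ∈ loc A G' ρ := by
            apply mem_loc_iff_span.2
            refine ⟨hv₁A, ?_⟩
            rw [← sg_mem_span_iff (c₀ := c₀), hdecomp]
            apply Submodule.add_mem
            · apply Submodule.smul_mem
              rw [sg_mem_span_iff]
              exact Submodule.subset_span (Set.mem_insert_of_mem _ rfl)
            · apply Submodule.smul_mem
              rw [sg_mem_span_iff]
              exact Submodule.subset_span (Set.mem_insert _ _)
          have hHdiff : v₁ ∈ loc A G' ρ \ (I ∩ loc A G' ρ) :=
            Finset.mem_sdiff.2 ⟨hHloc, fun h => hHI (Finset.mem_inter.1 h).1⟩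
          obtain ⟨e, hech, hHe, hesub⟩ := h2c G' ρ hcodim v₁ hHdiff
          obtain ⟨ye, hye⟩ := hech
          have hG'loc : G' ∈ loc A G' ρ := mem_loc_left hG'A ρ
          have hρloc : ρ ∈ loc A G' ρ := mem_loc_right hρA G'
          have hG'note : G' ∉ SepSet (loc A G' ρ) c₀ e := by
            intro hmem
            have := Finset.mem_sdiff.1 (hesub hmem)
            exact this.2 (Finset.mem_inter.2 ⟨hG'I, hG'loc⟩)
          have hρnote : ρ ∉ SepSet (loc A G' ρ) c₀ e := by
            intro hmem
            have := Finset.mem_sdiff.1 (hesub hmem)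
            exact this.2 (Finset.mem_inter.2 ⟨hρI, hρloc⟩)
          have hG'ye : 0 < sg c₀ G' ⬝ᵥ ye := by
            have heq : c₀ G' = e G' := by
              by_contra hne
              exact hG'note (mem_sepSet_iff.2 ⟨hG'loc, hne⟩)
            have h5 := realizes_iff.1 hye G' hG'loc
            rw [← sg_eq_of_eq heq] at h5
            exact h5
          have hρye : 0 < sg c₀ ρ ⬝ᵥ ye := by
            have heq : c₀ ρ = e ρ := by
              by_contra hne
              exact hρnote (mem_sepSet_iff.2 ⟨hρloc, hne⟩)
            have h5 := realizes_iff.1 hye ρ hρloc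
            rw [← sg_eq_of_eq heq] at h5
            exact h5
          have hHye : sg c₀ v₁ ⬝ᵥ ye < 0 := by
            have hne := (mem_sepSet_iff.1 hHe).2
            have h5 := realizes_iff.1 hye v₁ hHloc
            have h6 : sg c₀ v₁ = - sg e v₁ := sg_eq_neg_of_ne hne
            rw [h6, neg_dotProduct]
            linarith
          rw [hdecomp, add_dotProduct, smul_dotProduct, smul_dotProduct, smul_eq_mul,
            smul_eq_mul] at hHye
          nlinarith [mul_pos hβpos hρye, mul_pos hαpos hG'ye]
      · -- v₁ ≠ H : strictly smaller separation set still containing H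
        exact IH ((SepSet A c₀ c).card - 1) (by omega) H hHA
          ⟨flip c v₁, y', hy',
            by rw [hsep']; exact Finset.mem_erase.2 ⟨Ne.symm hv₁H, hHsep⟩,
            by rw [hsep', Finset.card_erase_of_mem hv₁sep]⟩
  -- conclude
  apply Finset.Subset.antisymm hIA
  intro H hHmem
  apply main A.card H hHmem
  refine ⟨fun v => !(c₀ v), -x₀, opp_realizes hx₀, ?_, ?_⟩
  · exact mem_sepSet_iff.2 ⟨hHmem, by cases c₀ H <;> simp⟩
  · exact Finset.card_filter_le _ _
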